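/- Let A : Fin l → Matrix (Fin m) (Fin m) ℝ be a symmetric third-order tensor. Then the real symmetric matrix bcirc(A) is positive semidefinite if and only if for every k ∈ Fin l the complex matrix D_k(A) := Σ_{s=0}^{l−1} e^{−2πi·sk/l} · A⁽ˢ⁾ is Hermitian positive semidefinite. -/

import Mathlib

open Matrix ComplexOrder

/-- The block circulant matrix of a third-order tensor given by its frontal slices. -/
def bcirc {m n l : ℕ} (A : Fin l → Matrix (Fin m) (Fin n) ℝ) :
    Matrix (Fin l × Fin m) (Fin l × Fin n) ℝ :=
  Matrix.of fun p q => A (p.1 - q.1) p.2 q.2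

/-- The `k`-th diagonal block `D_k(A) = Σ_{s=0}^{l-1} exp(-2πi·sk/l) · A⁽ˢ⁾`. -/
noncomputable def dftSlice {m n l : ℕ} (A : Fin l → Matrix (Fin m) (Fin n) ℝ) (k : Fin l) :
    Matrix (Fin m) (Fin n) ℂ :=
  ∑ s : Fin l,
    Complex.exp (-(2 * (Real.pi : ℂ) * Complex.I * ((s : ℕ) * (k : ℕ) : ℕ) / (l : ℂ))) •
      (A s).map (Complex.ofReal)


noncomputable def zc (l : ℕ) : ℂ := Complex.exp (2 * Real.pi * Complex.I / l)

set_option linter.unusedSectionVars false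
section
variable {l : ℕ} [NeZero l]

lemma zc_ne_zero : zc l ≠ 0 := Complex.exp_ne_zero _

lemma zc_prim : IsPrimitiveRoot (zc l) l := Complex.isPrimitiveRoot_exp l (NeZero.ne l)

lemma zc_zpow_int (n : ℤ) : zc l ^ n = Complex.exp (2 * Real.pi * Complex.I * n / l) := by
  rw [zc, ← Complex.exp_int_mul]
  ring_nf

lemma zc_zpow_eq_one {n : ℤ} (h : (l:ℤ) ∣ n) : zc l ^ n = 1 :=
  (zc_prim.zpow_eq_one_iff_dvd n).mpr h

lemma zc_congr {a b : ℤ} (h : (l:ℤ) ∣ a - b) : zc l ^ a = zc l ^ b := by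
  have h1 : zc l ^ (a - b) = 1 := zc_zpow_eq_one h
  have := zpow_add₀ (zc_ne_zero (l := l)) b (a - b)
  rw [h1, mul_one] at this
  rw [← this]; ring_nf

lemma conj_zc_zpow (n : ℤ) : (starRingEnd ℂ) (zc l ^ n) = zc l ^ (-n) := by
  have hconj : (starRingEnd ℂ) (zc l) = (zc l)⁻¹ := by
    rw [zc, ← Complex.exp_conj, ← Complex.exp_neg]
    congr 1
    simp [map_div₀, Complex.conj_ofReal]
    ring_nf
    simp [Complex.ext_iff]
    ring
  rw [map_zpow₀, hconj, _root_.inv_zpow, ← _root_.zpow_neg]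

lemma sum_zc_zpow (n : ℤ) :
    ∑ k : Fin l, zc l ^ (n * (k : ℤ)) = if (l:ℤ) ∣ n then (l:ℂ) else 0 := by
  have hterm : ∀ k : Fin l, zc l ^ (n * (k:ℤ)) = (zc l ^ n) ^ (k : ℕ) := by
    intro k
    rw [_root_.zpow_mul, zpow_natCast]
  simp only [hterm]
  rw [Fin.sum_univ_eq_sum_range fun i => (zc l ^ n) ^ i]
  split_ifs with h
  · simp [zc_zpow_eq_one h]
  · have hw : zc l ^ n ≠ 1 := fun hc => h ((zc_prim.zpow_eq_one_iff_dvd n).mp hc)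
    rw [geom_sum_eq hw]
    have : (zc l ^ n) ^ l = 1 := by
      rw [← zpow_natCast, ← _root_.zpow_mul]
      exact zc_zpow_eq_one ⟨n, by ring⟩
    simp [this]

end

section
variable {l : ℕ} [NeZero l]

/-- The character `χ_k(p) = ζ^{pk}`. -/
noncomputable def chi (k p : Fin l) : ℂ := zc l ^ ((p : ℤ) * (k : ℤ))

lemma int_mod_sub (x : ℕ) : (l:ℤ) ∣ ((x % l : ℕ) : ℤ) - (x:ℤ) := by
  have h2 : ((x % l : ℕ) : ℤ) = (x:ℤ) % (l:ℤ) := by push_cast; ring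
  rw [h2, Int.emod_def]
  exact ⟨-((x:ℤ)/(l:ℤ)), by ring⟩

lemma dvd_val_add (a b : Fin l) : (l:ℤ) ∣ (((a + b : Fin l) : ℕ) : ℤ) - ((a : ℤ) + (b : ℤ)) := by
  have h : ((a + b : Fin l) : ℕ) = ((a : ℕ) + (b : ℕ)) % l := Fin.val_add a b
  have h3 := int_mod_sub (l := l) ((a : ℕ) + (b : ℕ))
  rw [h]
  convert h3 using 2
  push_cast; ring

lemma dvd_val_neg (a : Fin l) : (l:ℤ) ∣ (((-a : Fin l) : ℕ) : ℤ) - (-(a : ℤ)) := by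
  have h := dvd_val_add (-a) a
  simp only [neg_add_cancel] at h
  have h0 : (((0 : Fin l) : ℕ) : ℤ) = 0 := by simp
  rw [h0] at h
  obtain ⟨c, hc⟩ := h
  exact ⟨-c, by linarith⟩

lemma chi_zero (k : Fin l) : chi k 0 = 1 := by simp [chi]

lemma chi_add (k p q : Fin l) : chi k (p + q) = chi k p * chi k q := by
  unfold chi
  rw [← zpow_add₀ (zc_ne_zero (l := l))]
  apply zc_congr
  have h := dvd_val_add p q
  obtain ⟨c, hc⟩ := h
  exact ⟨c * k, by push_cast at hc ⊢; linear_combination (k : ℤ) * hc⟩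

lemma conj_chi (k p : Fin l) : (starRingEnd ℂ) (chi k p) = chi k (-p) := by
  unfold chi
  rw [conj_zc_zpow]
  apply zc_congr
  obtain ⟨c, hc⟩ := dvd_val_neg p
  exact ⟨-(c * k), by push_cast at hc ⊢; linear_combination (-(k:ℤ)) * hc⟩

lemma chi_mul_conj (k p : Fin l) : chi k p * (starRingEnd ℂ) (chi k p) = 1 := by
  rw [conj_chi, ← chi_add]
  simp [chi_zero]

lemma chi_sub_mul (k p q : Fin l) : chi k (p - q) * chi k q = chi k p := by
  rw [← chi_add, sub_add_cancel]

/-- key orthogonality condition -/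
lemma dvd_iff_eq_sub (p s q : Fin l) :
    (l:ℤ) ∣ ((p : ℤ) - (s : ℤ) - (q : ℤ)) ↔ s = p - q := by
  constructor
  · intro h
    have h1 := dvd_val_add s q
    -- l ∣ (s+q).val - (s + q); combine: l ∣ p - (s+q).val
    have h2 : (l:ℤ) ∣ ((p:ℤ) - (((s + q : Fin l) : ℕ) : ℤ)) := by
      obtain ⟨c, hc⟩ := h; obtain ⟨d, hd⟩ := h1
      exact ⟨c - d, by linarith⟩
    have hp : ((p:ℤ)) < l := by exact_mod_cast p.2
    have hsq : ((((s + q : Fin l) : ℕ)) : ℤ) < l := by exact_mod_cast (s + q).2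
    have hp0 : (0:ℤ) ≤ (p:ℤ) := by positivity
    have hsq0 : (0:ℤ) ≤ ((((s + q : Fin l) : ℕ)) : ℤ) := by positivity
    have hz : (p:ℤ) - (((s + q : Fin l) : ℕ) : ℤ) = 0 := by
      refine Int.eq_zero_of_abs_lt_dvd h2 ?_
      rw [abs_lt]
      constructor <;> omega
    have : (p:ℤ) = (((s + q : Fin l) : ℕ) : ℤ) := by omega
    have hpv : p = s + q := by
      apply Fin.ext
      exact_mod_cast this
    rw [hpv]
    simp
  · rintro rfl
    obtain ⟨c, hc⟩ := dvd_val_add (p - q) q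
    rw [sub_add_cancel] at hc
    exact ⟨c, by linarith⟩

end

section
variable {l m : ℕ} [NeZero l]

lemma dft_entry (A : Fin l → Matrix (Fin m) (Fin m) ℝ) (k : Fin l) (i j : Fin m) :
    dftSlice A k i j = ∑ s : Fin l, star (chi k s) * ((A s i j : ℝ) : ℂ) := by
  unfold dftSlice
  rw [Matrix.sum_apply]
  refine Finset.sum_congr rfl fun s _ => ?_
  rw [Matrix.smul_apply, Matrix.map_apply, smul_eq_mul]
  congr 1
  rw [chi, ← starRingEnd_apply, conj_zc_zpow, zc_zpow_int]
  congr 1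
  push_cast
  ring

lemma sum_comm3 {α β γ M : Type*} [Fintype α] [Fintype β] [Fintype γ] [AddCommMonoid M]
    (f : α → β → γ → M) :
    ∑ a, ∑ b, ∑ c, f a b c = ∑ c, ∑ a, ∑ b, f a b c := by
  calc ∑ a, ∑ b, ∑ c, f a b c
      = ∑ a, ∑ c, ∑ b, f a b c := Finset.sum_congr rfl fun a _ => Finset.sum_comm
    _ = ∑ c, ∑ a, ∑ b, f a b c := Finset.sum_comm

lemma dft_isHermitian (A : Fin l → Matrix (Fin m) (Fin m) ℝ)
    (hsymm : ∀ k : Fin l, (A k)ᵀ = A (-k)) (k : Fin l) :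
    (dftSlice A k).IsHermitian := by
  apply Matrix.ext
  intro i j
  rw [conjTranspose_apply, dft_entry, dft_entry, star_sum]
  refine Fintype.sum_equiv (Equiv.neg (Fin l)) _ _ fun s => ?_
  simp only [Equiv.neg_apply]
  simp only [star_mul', star_star, Complex.star_def, Complex.conj_ofReal, conj_chi, neg_neg]
  congr 1
  have h2 : A (-s) i j = (A s)ᵀ i j := by rw [hsymm s]
  rw [h2]
  rfl

/-- shear equivalence used to reindex the double block sum -/
def shearE (l m : ℕ) [NeZero l] :
    ((Fin l × Fin m) × (Fin l × Fin m)) ≃ ((Fin l × Fin l) × (Fin m × Fin m)) where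
  toFun z := ((z.1.1 - z.2.1, z.2.1), (z.1.2, z.2.2))
  invFun w := ((w.1.1 + w.1.2, w.2.1), (w.1.2, w.2.2))
  left_inv := by rintro ⟨⟨p, i⟩, ⟨q, j⟩⟩; simp
  right_inv := by rintro ⟨⟨s, q⟩, ⟨i, j⟩⟩; simp

lemma quad_forward (A : Fin l → Matrix (Fin m) (Fin m) ℝ) (k : Fin l) (v : Fin m → ℂ) :
    star (fun pi : Fin l × Fin m => chi k pi.1 * v pi.2) ⬝ᵥ
      (((bcirc A).map (Complex.ofReal)) *ᵥ fun pi : Fin l × Fin m => chi k pi.1 * v pi.2)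
      = (l : ℂ) * (star v ⬝ᵥ (dftSlice A k *ᵥ v)) := by
  have step1 : star (fun pi : Fin l × Fin m => chi k pi.1 * v pi.2) ⬝ᵥ
      (((bcirc A).map (Complex.ofReal)) *ᵥ fun pi : Fin l × Fin m => chi k pi.1 * v pi.2)
      = ∑ z : (Fin l × Fin m) × (Fin l × Fin m),
          star (chi k z.1.1) * star (v z.1.2) *
            ((A (z.1.1 - z.2.1) z.1.2 z.2.2 : ℝ) : ℂ) * (chi k z.2.1 * v z.2.2) := by
    conv_rhs => rw [Fintype.sum_prod_type]
    rw [dotProduct]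
    refine Finset.sum_congr rfl fun pi _ => ?_
    rw [mulVec, dotProduct, Finset.mul_sum]
    refine Finset.sum_congr rfl fun qj _ => ?_
    simp only [Pi.star_apply, star_mul', Matrix.map_apply, bcirc, Matrix.of_apply]
    ring
  rw [step1]
  have step2 : ∑ z : (Fin l × Fin m) × (Fin l × Fin m),
        star (chi k z.1.1) * star (v z.1.2) *
          ((A (z.1.1 - z.2.1) z.1.2 z.2.2 : ℝ) : ℂ) * (chi k z.2.1 * v z.2.2)
      = ∑ w : (Fin l × Fin l) × (Fin m × Fin m),
          star (chi k w.1.1) * (star (v w.2.1) * ((A w.1.1 w.2.1 w.2.2 : ℝ) : ℂ) * v w.2.2) := by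
    refine Fintype.sum_equiv (shearE l m) _ _ ?_
    rintro ⟨⟨p, i⟩, ⟨q, j⟩⟩
    simp only [shearE, Equiv.coe_fn_mk]
    have h1 : star (chi k p) = star (chi k (p - q)) * star (chi k q) := by
      rw [← star_mul', chi_sub_mul]
    have h2 : star (chi k q) * chi k q = 1 := by
      rw [Complex.star_def, mul_comm]
      exact chi_mul_conj k q
    linear_combination (star (v i) * ((A (p - q) i j : ℝ) : ℂ) * v j * chi k q) * h1 +
      (star (chi k (p - q)) * star (v i) * ((A (p - q) i j : ℝ) : ℂ) * v j) * h2
  rw [step2]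
  calc ∑ w : (Fin l × Fin l) × (Fin m × Fin m),
          star (chi k w.1.1) * (star (v w.2.1) * ((A w.1.1 w.2.1 w.2.2 : ℝ) : ℂ) * v w.2.2)
      = ∑ s : Fin l, ∑ q : Fin l, ∑ i : Fin m, ∑ j : Fin m,
          star (chi k s) * (star (v i) * ((A s i j : ℝ) : ℂ) * v j) := by
        simp only [Fintype.sum_prod_type]
    _ = ∑ s : Fin l, (l : ℂ) * ∑ i : Fin m, ∑ j : Fin m,
          star (chi k s) * (star (v i) * ((A s i j : ℝ) : ℂ) * v j) := by
        refine Finset.sum_congr rfl fun s _ => ?_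
        rw [Finset.sum_const, Finset.card_univ, Fintype.card_fin, nsmul_eq_mul]
    _ = (l : ℂ) * ∑ s : Fin l, ∑ i : Fin m, ∑ j : Fin m,
          star (chi k s) * (star (v i) * ((A s i j : ℝ) : ℂ) * v j) := by
        rw [Finset.mul_sum]
    _ = (l : ℂ) * (star v ⬝ᵥ (dftSlice A k *ᵥ v)) := by
        congr 1
        rw [← sum_comm3 fun i j s => star (chi k s) * (star (v i) * ((A s i j : ℝ) : ℂ) * v j)]
        rw [dotProduct]
        refine Finset.sum_congr rfl fun i _ => ?_
        rw [mulVec, dotProduct, Finset.mul_sum]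
        refine Finset.sum_congr rfl fun j _ => ?_
        rw [dft_entry, Finset.sum_mul, Finset.mul_sum]
        refine Finset.sum_congr rfl fun s _ => ?_
        simp only [Pi.star_apply]
        ring

lemma chi_combine (k p s q : Fin l) :
    chi k p * star (chi k s) * star (chi k q) = zc l ^ (((p : ℤ) - (s : ℤ) - (q : ℤ)) * (k : ℤ)) := by
  unfold chi
  simp only [Complex.star_def, conj_zc_zpow]
  rw [← zpow_add₀ (zc_ne_zero (l := l)), ← zpow_add₀ (zc_ne_zero (l := l))]
  congr 1
  ring

lemma inner_collapse (p q : Fin l) (c : Fin l → ℂ) :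
    ∑ s : Fin l, ∑ k : Fin l, zc l ^ (((p : ℤ) - (s : ℤ) - (q : ℤ)) * (k : ℤ)) * c s
      = (l : ℂ) * c (p - q) := by
  have h : ∀ s : Fin l, ∑ k : Fin l, zc l ^ (((p : ℤ) - (s : ℤ) - (q : ℤ)) * (k : ℤ)) * c s
      = if s = p - q then (l : ℂ) * c s else 0 := by
    intro s
    rw [← Finset.sum_mul, sum_zc_zpow, if_congr (dvd_iff_eq_sub p s q) rfl rfl, ite_mul, zero_mul]
  simp only [h]
  rw [Finset.sum_ite_eq' Finset.univ (p - q) fun s => (l : ℂ) * c s]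
  simp

def perm6 (α₁ α₂ α₃ α₄ α₅ α₆ : Type*) :
    (α₁ × α₂ × α₃ × α₄ × α₅ × α₆) ≃ (α₄ × α₂ × α₆ × α₃ × α₅ × α₁) where
  toFun z := (z.2.2.2.1, z.2.1, z.2.2.2.2.2, z.2.2.1, z.2.2.2.2.1, z.1)
  invFun w := (w.2.2.2.2.2, w.2.1, w.2.2.2.1, w.1, w.2.2.2.2.1, w.2.2.1)
  left_inv := by rintro ⟨a, b, c, d, e, f⟩; rfl
  right_inv := by rintro ⟨a, b, c, d, e, f⟩; rfl

lemma sum_comm6 {α₁ α₂ α₃ α₄ α₅ α₆ M : Type*} [Fintype α₁] [Fintype α₂] [Fintype α₃]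
    [Fintype α₄] [Fintype α₅] [Fintype α₆] [AddCommMonoid M]
    (f : α₁ → α₂ → α₃ → α₄ → α₅ → α₆ → M) :
    ∑ a₁, ∑ a₂, ∑ a₃, ∑ a₄, ∑ a₅, ∑ a₆, f a₁ a₂ a₃ a₄ a₅ a₆
      = ∑ a₄, ∑ a₂, ∑ a₆, ∑ a₃, ∑ a₅, ∑ a₁, f a₁ a₂ a₃ a₄ a₅ a₆ := by
  have h1 : (∑ z : α₁ × α₂ × α₃ × α₄ × α₅ × α₆,
      f z.1 z.2.1 z.2.2.1 z.2.2.2.1 z.2.2.2.2.1 z.2.2.2.2.2)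
      = ∑ a₁, ∑ a₂, ∑ a₃, ∑ a₄, ∑ a₅, ∑ a₆, f a₁ a₂ a₃ a₄ a₅ a₆ := by
    simp only [Fintype.sum_prod_type]
  have h2 : (∑ w : α₄ × α₂ × α₆ × α₃ × α₅ × α₁,
      f w.2.2.2.2.2 w.2.1 w.2.2.2.1 w.1 w.2.2.2.2.1 w.2.2.1)
      = ∑ a₄, ∑ a₂, ∑ a₆, ∑ a₃, ∑ a₅, ∑ a₁, f a₁ a₂ a₃ a₄ a₅ a₆ := by
    simp only [Fintype.sum_prod_type]
  rw [← h1, ← h2]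
  exact Fintype.sum_equiv (perm6 α₁ α₂ α₃ α₄ α₅ α₆) _ _ (fun z => rfl)

lemma quad_backward (A : Fin l → Matrix (Fin m) (Fin m) ℝ) (x : Fin l × Fin m → ℝ) :
    ∑ k : Fin l, (star (fun i : Fin m => ∑ p : Fin l, star (chi k p) * ((x (p, i) : ℝ) : ℂ)) ⬝ᵥ
      (dftSlice A k *ᵥ fun i : Fin m => ∑ p : Fin l, star (chi k p) * ((x (p, i) : ℝ) : ℂ)))
      = (l : ℂ) * ((x ⬝ᵥ (bcirc A) *ᵥ x : ℝ) : ℂ) := by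
  have step1 : ∀ k : Fin l,
      (star (fun i : Fin m => ∑ p : Fin l, star (chi k p) * ((x (p, i) : ℝ) : ℂ)) ⬝ᵥ
        (dftSlice A k *ᵥ fun i : Fin m => ∑ p : Fin l, star (chi k p) * ((x (p, i) : ℝ) : ℂ)))
      = ∑ i : Fin m, ∑ j : Fin m, ∑ p : Fin l, ∑ s : Fin l, ∑ q : Fin l,
          chi k p * ((x (p, i) : ℝ) : ℂ) * (star (chi k s) * ((A s i j : ℝ) : ℂ)) *
            (star (chi k q) * ((x (q, j) : ℝ) : ℂ)) := by
    intro k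
    rw [dotProduct]
    refine Finset.sum_congr rfl fun i _ => ?_
    rw [mulVec, dotProduct, Finset.mul_sum]
    refine Finset.sum_congr rfl fun j _ => ?_
    have hsv : star (fun i : Fin m => ∑ p : Fin l, star (chi k p) * ((x (p, i) : ℝ) : ℂ)) i
        = ∑ p : Fin l, chi k p * ((x (p, i) : ℝ) : ℂ) := by
      simp [star_sum, star_mul', Complex.star_def, Complex.conj_ofReal]
    rw [hsv, dft_entry]
    simp only [Finset.sum_mul, Finset.mul_sum]
    rw [sum_comm3 fun q s p => chi k p * ((x (p, i) : ℝ) : ℂ) *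
      (star (chi k s) * ((A s i j : ℝ) : ℂ) * (star (chi k q) * ((x (q, j) : ℝ) : ℂ)))]
    refine Finset.sum_congr rfl fun p _ => ?_
    rw [Finset.sum_comm]
    refine Finset.sum_congr rfl fun s _ => Finset.sum_congr rfl fun q _ => ?_
    ring
  simp only [step1]
  rw [sum_comm6 fun k i j p s q => chi k p * ((x (p, i) : ℝ) : ℂ) *
      (star (chi k s) * ((A s i j : ℝ) : ℂ)) * (star (chi k q) * ((x (q, j) : ℝ) : ℂ))]
  have step2 : ∀ (p q : Fin l) (i j : Fin m),
      ∑ s : Fin l, ∑ k : Fin l, chi k p * ((x (p, i) : ℝ) : ℂ) *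
          (star (chi k s) * ((A s i j : ℝ) : ℂ)) * (star (chi k q) * ((x (q, j) : ℝ) : ℂ))
      = (l : ℂ) * (((x (p, i) : ℝ) : ℂ) * ((A (p - q) i j : ℝ) : ℂ) * ((x (q, j) : ℝ) : ℂ)) := by
    intro p q i j
    rw [← inner_collapse p q fun s => ((x (p, i) : ℝ) : ℂ) * ((A s i j : ℝ) : ℂ) * ((x (q, j) : ℝ) : ℂ)]
    refine Finset.sum_congr rfl fun s _ => Finset.sum_congr rfl fun k _ => ?_
    have hc := chi_combine k p s q
    linear_combination (((x (p, i) : ℝ) : ℂ) * ((A s i j : ℝ) : ℂ) * ((x (q, j) : ℝ) : ℂ)) * hc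
  simp only [step2]
  have expand : ((x ⬝ᵥ (bcirc A) *ᵥ x : ℝ) : ℂ)
      = ∑ p : Fin l, ∑ i : Fin m, ∑ q : Fin l, ∑ j : Fin m,
          ((x (p, i) : ℝ) : ℂ) * ((A (p - q) i j : ℝ) : ℂ) * ((x (q, j) : ℝ) : ℂ) := by
    simp only [dotProduct, mulVec, bcirc, Matrix.of_apply, Fintype.sum_prod_type]
    push_cast
    refine Finset.sum_congr rfl fun p _ => Finset.sum_congr rfl fun i _ => ?_
    simp only [Finset.mul_sum]
    refine Finset.sum_congr rfl fun q _ => Finset.sum_congr rfl fun j _ => ?_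
    ring
  rw [expand]
  simp only [Finset.mul_sum]

lemma bcirc_isHermitian (A : Fin l → Matrix (Fin m) (Fin m) ℝ)
    (hsymm : ∀ k : Fin l, (A k)ᵀ = A (-k)) : (bcirc A).IsHermitian := by
  apply Matrix.ext
  rintro ⟨p, i⟩ ⟨q, j⟩
  rw [conjTranspose_apply]
  simp only [bcirc, Matrix.of_apply, star_trivial]
  calc A (q - p) j i = (A (q - p))ᵀ i j := rfl
    _ = A (-(q - p)) i j := by rw [hsymm]
    _ = A (p - q) i j := by rw [neg_sub]

lemma map_posSemidef {n' : Type*} [Fintype n'] [DecidableEq n'] {M : Matrix n' n' ℝ}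
    (hM : M.PosSemidef) : (M.map Complex.ofReal).PosSemidef := by
  obtain ⟨B, rfl⟩ : ∃ B : Matrix n' n' ℝ, M = Bᴴ * B := by
    open scoped MatrixOrder in
    obtain ⟨B, hB⟩ := CStarAlgebra.nonneg_iff_eq_star_mul_self.mp hM.nonneg
    exact ⟨B, hB⟩
  have h : (Bᴴ * B).map Complex.ofReal = (B.map Complex.ofReal)ᴴ * (B.map Complex.ofReal) := by
    rw [show (Complex.ofReal : ℝ → ℂ) = ⇑Complex.ofRealHom from rfl,
      Matrix.map_mul (f := Complex.ofRealHom)]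
    congr 1
    rw [Matrix.conjTranspose_map (⇑Complex.ofRealHom) fun r => by
      simp [Complex.conj_ofReal]]
  rw [h]
  exact Matrix.posSemidef_conjTranspose_mul_self _

lemma nonneg_of_nat_mul {z : ℂ} (h : 0 ≤ (l : ℂ) * z) : 0 ≤ z := by
  have hinv : (0 : ℂ) ≤ ((l : ℂ))⁻¹ := by
    rw [show ((l : ℂ))⁻¹ = (((l : ℝ)⁻¹ : ℝ) : ℂ) by push_cast; ring, Complex.zero_le_real]
    positivity
  have := mul_nonneg hinv h
  rwa [inv_mul_cancel_left₀ (by exact_mod_cast (NeZero.ne l)) z] at this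

end

/-- for a symmetric third-order tensor `A`, the real symmetric matrix
`bcirc(A)` is positive semidefinite iff every Fourier block `D_k(A)` is Hermitian
positive semidefinite. -/
theorem bcirc_posSemidef_iff_dftSlices_posSemidef
    (m l : ℕ) (A : Fin l → Matrix (Fin m) (Fin m) ℝ)
    (hsymm : ∀ k : Fin l, (A k)ᵀ = A (-k)) :
    (bcirc A).PosSemidef ↔ ∀ k : Fin l, (dftSlice A k).PosSemidef := by
  rcases Nat.eq_zero_or_pos l with hl | hl
  · subst hl
    constructor
    · intro _ k
      exact k.elim0
    · intro _
      refine posSemidef_iff_dotProduct_mulVec.mpr ⟨?_, ?_⟩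
      · apply Matrix.ext
        rintro ⟨p, i⟩ _
        exact p.elim0
      · intro x
        rw [dotProduct]
        rw [show (Finset.univ : Finset (Fin 0 × Fin m)) = ∅ by simp]
        simp
  · haveI : NeZero l := ⟨hl.ne'⟩
    constructor
    · intro hB k
      refine posSemidef_iff_dotProduct_mulVec.mpr ⟨dft_isHermitian A hsymm k, ?_⟩
      intro v
      have hC : ((bcirc A).map Complex.ofReal).PosSemidef := map_posSemidef hB
      have h := hC.dotProduct_mulVec_nonneg (fun pi : Fin l × Fin m => chi k pi.1 * v pi.2)
      rw [quad_forward A k v] at h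
      exact nonneg_of_nat_mul h
    · intro hD
      refine posSemidef_iff_dotProduct_mulVec.mpr ⟨bcirc_isHermitian A hsymm, ?_⟩
      intro x
      have h : 0 ≤ (l : ℂ) * ((x ⬝ᵥ (bcirc A) *ᵥ x : ℝ) : ℂ) := by
        rw [← quad_backward A x]
        refine Finset.sum_nonneg fun k _ => ?_
        exact (hD k).dotProduct_mulVec_nonneg _
      have h2 := nonneg_of_nat_mul h
      rw [Complex.zero_le_real] at h2
      simpa using h2
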